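/- Consider a K-level regular tree with N_{k+1} = a_{k+1}·N_k for integer degrees a_{k+1} ≥ 2, per-level positive costs c̃_1,…,c̃_K satisfying max_k c̃_k ≤ (min_{k<K} N_{k+1}/N_k)·min_k c̃_k, attacker budget C ≥ 0, per-node probabilities 0 < P_fa < P_d < 1, and total KLD D(B) = Σ_{k=1}^K N_k · D*(Σ_{i=1}^k B_i/N_i) where D*(t) is the Bernoulli KL divergence between P_fa + t(1−2P_fa) and P_d + t(1−2P_d). Define the greedy configuration B̂ recursively by B̂_1 = ⌊C/c̃_1⌋ and B̂_k = ⌊(C − Σ_{j<k} c̃_j B̂_j)/c̃_k⌋ for k ≥ 2. If B̂ is feasible (B̂_k ≤ N_k for all k) and every feasible configuration B (i.e., integer B with 0 ≤ B_k ≤ N_k and Σ_k c̃_k B_k ≤ C) satisfies Σ_{i=1}^k B_i/N_i < 1/2 for all k, then B̂ minimizes D over all feasible configurations: D(B̂) ≤ D(B) for every feasible B. -/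

import Mathlib

open Finset

/-- Bernoulli Kullback–Leibler divergence between success probabilities `a` and `b`. -/
noncomputable def klBern (a b : ℝ) : ℝ :=
  a * Real.log (a / b) + (1 - a) * Real.log ((1 - a) / (1 - b))

/-- Per-node level KL divergence under the optimal attack `(1,1)` as a function of the
covered fraction `t`. -/
noncomputable def Dstar (Pfa Pd t : ℝ) : ℝ :=
  klBern (Pfa + t * (1 - 2 * Pfa)) (Pd + t * (1 - 2 * Pd))

lemma mul_log_conv2 {x1 x2 y1 y2 l : ℝ} (hx1 : 0 < x1) (hx2 : 0 < x2)
    (hy1 : 0 < y1) (hy2 : 0 < y2) (hl0 : 0 ≤ l) (hl1 : l ≤ 1) :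
    (l*x1+(1-l)*x2) * Real.log ((l*x1+(1-l)*x2)/(l*y1+(1-l)*y2)) ≤
      l*(x1*Real.log (x1/y1)) + (1-l)*(x2*Real.log (x2/y2)) := by
  set Y := l*y1+(1-l)*y2 with hY
  have hYpos : 0 < Y := by rcases le_total y1 y2 with h|h <;> nlinarith
  set X := l*x1+(1-l)*x2 with hX
  have hw1 : (0:ℝ) ≤ l*y1/Y := by positivity
  have hw2 : (0:ℝ) ≤ (1-l)*y2/Y := div_nonneg (mul_nonneg (by linarith) hy2.le) hYpos.le
  have hws : l*y1/Y + (1-l)*y2/Y = 1 := by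
    rw [← add_div, div_eq_one_iff_eq hYpos.ne']
  have hconv := Real.convexOn_mul_log.2 (Set.mem_Ici.2 (le_of_lt (div_pos hx1 hy1)))
    (Set.mem_Ici.2 (le_of_lt (div_pos hx2 hy2))) hw1 hw2 hws
  have hcomb : (l*y1/Y) • (x1/y1) + ((1-l)*y2/Y) • (x2/y2) = X/Y := by
    simp only [smul_eq_mul]
    field_simp
    ring
  rw [hcomb] at hconv
  have h2 := mul_le_mul_of_nonneg_left hconv (le_of_lt hYpos)
  calc X * Real.log (X/Y) = Y * (X/Y * Real.log (X/Y)) := by field_simp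
    _ ≤ Y * ((l*y1/Y) • (x1/y1 * Real.log (x1/y1)) + ((1-l)*y2/Y) • (x2/y2 * Real.log (x2/y2))) := h2
    _ = l*(x1*Real.log (x1/y1)) + (1-l)*(x2*Real.log (x2/y2)) := by
        simp only [smul_eq_mul]; field_simp

lemma klBern_conv2 {a b a' b' l : ℝ} (ha : a ∈ Set.Ioo (0:ℝ) 1) (hb : b ∈ Set.Ioo (0:ℝ) 1)
    (ha' : a' ∈ Set.Ioo (0:ℝ) 1) (hb' : b' ∈ Set.Ioo (0:ℝ) 1)
    (hl0 : 0 ≤ l) (hl1 : l ≤ 1) :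
    klBern (l*a+(1-l)*a') (l*b+(1-l)*b') ≤ l * klBern a b + (1-l) * klBern a' b' := by
  have h1 := mul_log_conv2 ha.1 ha'.1 hb.1 hb'.1 hl0 hl1
  have h2 := mul_log_conv2 (x1 := 1-a) (x2 := 1-a') (y1 := 1-b) (y2 := 1-b')
    (by linarith [ha.2]) (by linarith [ha'.2]) (by linarith [hb.2]) (by linarith [hb'.2]) hl0 hl1
  have e1 : (1:ℝ) - (l*a+(1-l)*a') = l*(1-a)+(1-l)*(1-a') := by ring
  have e2 : (1:ℝ) - (l*b+(1-l)*b') = l*(1-b)+(1-l)*(1-b') := by ring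
  simp only [klBern, e1, e2]
  linarith

lemma klBern_flip (a b : ℝ) : klBern (1-a) (1-b) = klBern a b := by
  have e1 : (1:ℝ) - (1-a) = a := by ring
  have e2 : (1:ℝ) - (1-b) = b := by ring
  rw [klBern, klBern, e1, e2, add_comm]

lemma Dstar_anti {Pfa Pd : ℝ} (hPfa : 0 < Pfa) (hPfaPd : Pfa < Pd) (hPd : Pd < 1)
    {s t : ℝ} (hs : 0 ≤ s) (hst : s ≤ t) (ht : t < 1/2) :
    Dstar Pfa Pd t ≤ Dstar Pfa Pd s := by
  rcases eq_or_lt_of_le hst with rfl | hst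
  · exact le_refl _
  have hs2 : s < 1/2 := lt_trans hst ht
  have h2s : 0 < 1 - 2*s := by linarith
  have hPfa1 : Pfa < 1 := lt_trans hPfaPd hPd
  have hPd0 : 0 < Pd := lt_trans hPfa hPfaPd
  set l : ℝ := (1 - s - t)/(1 - 2*s) with hl
  have hl0 : 0 ≤ l := div_nonneg (by linarith) (by linarith)
  have hl1 : l ≤ 1 := by rw [div_le_one h2s]; linarith
  set A := Pfa + s*(1-2*Pfa) with hA
  set Bb := Pd + s*(1-2*Pd) with hB
  have hAmem : A ∈ Set.Ioo (0:ℝ) 1 := by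
    constructor
    · nlinarith [mul_pos hPfa h2s]
    · nlinarith [mul_pos (show (0:ℝ) < 1-Pfa by linarith) (show (0:ℝ) < 1-s by linarith),
        mul_nonneg hs hPfa.le]
  have hBmem : Bb ∈ Set.Ioo (0:ℝ) 1 := by
    constructor
    · nlinarith [mul_pos hPd0 h2s]
    · nlinarith [mul_pos (show (0:ℝ) < 1-Pd by linarith) (show (0:ℝ) < 1-s by linarith),
        mul_nonneg hs hPd0.le]
  have hAcmem : 1 - A ∈ Set.Ioo (0:ℝ) 1 := ⟨by linarith [hAmem.2], by linarith [hAmem.1]⟩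
  have hBcmem : 1 - Bb ∈ Set.Ioo (0:ℝ) 1 := ⟨by linarith [hBmem.2], by linarith [hBmem.1]⟩
  have key := klBern_conv2 hAmem hBmem hAcmem hBcmem hl0 hl1
  have e1 : l*A + (1-l)*(1-A) = Pfa + t*(1-2*Pfa) := by
    rw [hl, hA, div_mul_eq_mul_div, one_sub_div h2s.ne', div_mul_eq_mul_div, ← add_div, div_eq_iff h2s.ne']; ring
  have e2 : l*Bb + (1-l)*(1-Bb) = Pd + t*(1-2*Pd) := by
    rw [hl, hB, div_mul_eq_mul_div, one_sub_div h2s.ne', div_mul_eq_mul_div, ← add_div, div_eq_iff h2s.ne']; ring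
  rw [e1, e2] at key
  have : Dstar Pfa Pd s = klBern A Bb := by rw [Dstar, hA, hB]
  rw [Dstar, this]
  calc klBern (Pfa + t*(1-2*Pfa)) (Pd + t*(1-2*Pd)) ≤
      l * klBern A Bb + (1-l) * klBern (1-A) (1-Bb) := key
    _ = klBern A Bb := by rw [klBern_flip]; ring

/-- In a `K`-level regular tree whose costs satisfy
`max c̃ ≤ (min_{k} N_{k+1}/N_k) · min c̃`, the greedy top-down configuration
`B̂_k = ⌊(C − ∑_{j<k} c̃_j B̂_j)/c̃_k⌋` minimizes the total KL divergence
`D(B) = ∑ₖ Nₖ · D*(∑_{i≤k} Bᵢ/Nᵢ)` over all budget-feasible configurations,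
provided no feasible configuration can blind the fusion center.
(Levels are indexed `0,…,K-1`.) -/

theorem stmt_15 (Pfa Pd : ℝ)
    (hPfa : 0 < Pfa) (hPfaPd : Pfa < Pd) (hPd : Pd < 1)
    (K : ℕ) (hK : 1 ≤ K)
    (N a : ℕ → ℕ) (hN : ∀ k < K, 1 ≤ N k)
    (ha : ∀ k, k + 1 < K → 2 ≤ a (k + 1) ∧ N (k + 1) = a (k + 1) * N k)
    (c : ℕ → ℝ) (hc : ∀ k < K, 0 < c k)
    (hcost : ∀ i < K, ∀ j < K, ∀ m, m + 1 < K →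
      c i ≤ ((N (m + 1) : ℝ) / (N m : ℝ)) * c j)
    (C : ℝ) (hC : 0 ≤ C)
    (Bhat : ℕ → ℕ)
    (hBhat : ∀ k < K,
      Bhat k = ⌊(C - ∑ j ∈ range k, c j * (Bhat j : ℝ)) / c k⌋₊)
    (hBhatFeas : ∀ k < K, Bhat k ≤ N k)
    (hBhatBudget : ∑ k ∈ range K, c k * (Bhat k : ℝ) ≤ C)
    (hblind : ∀ B : ℕ → ℕ, (∀ k < K, B k ≤ N k) →
      (∑ k ∈ range K, c k * (B k : ℝ) ≤ C) →
      ∀ k < K, ∑ i ∈ range (k + 1), (B i : ℝ) / (N i : ℝ) < 1 / 2) :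
    ∀ B : ℕ → ℕ, (∀ k < K, B k ≤ N k) →
      (∑ k ∈ range K, c k * (B k : ℝ) ≤ C) →
      ∑ k ∈ range K, (N k : ℝ) *
          Dstar Pfa Pd (∑ i ∈ range (k + 1), (Bhat i : ℝ) / (N i : ℝ)) ≤
        ∑ k ∈ range K, (N k : ℝ) *
          Dstar Pfa Pd (∑ i ∈ range (k + 1), (B i : ℝ) / (N i : ℝ)) := by
  intro B hBfeas hBbudget
  have hNpos : ∀ k, k < K → (0:ℝ) < N k := by
    intro k hk; exact_mod_cast Nat.lt_of_lt_of_le Nat.zero_lt_one (hN k hk)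
  have hprefix : ∀ (B' : ℕ → ℕ), (∑ i ∈ range K, c i * (B' i : ℝ)) ≤ C →
      ∀ k, k ≤ K → (∑ i ∈ range k, c i * (B' i : ℝ)) ≤ C := by
    intro B' hB' k hkK
    refine le_trans (Finset.sum_le_sum_of_subset_of_nonneg (range_subset_range.2 hkK) ?_) hB'
    intro i hi _
    exact mul_nonneg (hc i (mem_range.1 hi)).le (Nat.cast_nonneg _)
  -- greedy dominance
  have key : ∀ k, k < K → ∃ z : ℤ, 0 ≤ z ∧
      (N k : ℝ) * (∑ i ∈ range (k+1), ((Bhat i : ℝ) - (B i : ℝ))/(N i : ℝ)) = (z : ℝ) ∧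
      (∑ i ∈ range (k+1), c i * ((Bhat i : ℝ) - (B i : ℝ))) ≤ c k * (z : ℝ) := by
    intro k
    induction k with
    | zero =>
      intro hk
      have hB0C : c 0 * (B 0 : ℝ) ≤ C := by
        refine le_trans (Finset.single_le_sum (f := fun i => c i * (B i : ℝ)) ?_
          (mem_range.2 hk)) hBbudget
        intro i hi
        exact mul_nonneg (hc i (mem_range.1 hi)).le (Nat.cast_nonneg _)
      have hle : B 0 ≤ Bhat 0 := by
        rw [hBhat 0 hk]
        apply Nat.le_floor
        rw [le_div_iff₀ (hc 0 hk)]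
        simpa [mul_comm] using hB0C
      have hN0 : ((N 0 : ℕ):ℝ) ≠ 0 := (hNpos 0 hk).ne'
      refine ⟨(Bhat 0 : ℤ) - (B 0 : ℤ), ?_, ?_, ?_⟩
      · simpa using (Int.ofNat_le.2 hle)
      · simp only [zero_add, Finset.sum_range_one]
        push_cast
        field_simp
      · simp only [zero_add, Finset.sum_range_one]
        refine le_of_eq ?_
        push_cast
        ring
    | succ k ih =>
      intro hk1
      have hk : k < K := Nat.lt_of_succ_lt hk1
      obtain ⟨z, hz0, hzT, hzc⟩ := ih hk
      obtain ⟨ha2, haN⟩ := ha k hk1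
      have hNk : (0:ℝ) < N k := hNpos k hk
      have hNk1 : (0:ℝ) < N (k+1) := hNpos (k+1) hk1
      have eq1 : ((N (k+1) : ℕ) : ℝ) = (a (k+1) : ℝ) * (N k : ℝ) := by
        rw [haN]; push_cast; ring
      have hck1 : 0 < c (k+1) := hc (k+1) hk1
      have hzr : (0:ℝ) ≤ (z:ℝ) := by exact_mod_cast hz0
      have hcNN : c k ≤ (a (k+1) : ℝ) * c (k+1) := by
        have h := hcost k hk (k+1) hk1 k hk1
        rwa [eq1, mul_div_assoc, div_self hNk.ne', mul_one] at h
      set Δ : ℤ := (Bhat (k+1) : ℤ) - (B (k+1) : ℤ) with hΔ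
      have hΔr : ((Δ : ℤ) : ℝ) = (Bhat (k+1) : ℝ) - (B (k+1) : ℝ) := by
        rw [hΔ]; push_cast; ring
      -- cost upper bound
      have hub : (∑ i ∈ range (k+1+1), c i * ((Bhat i : ℝ) - (B i : ℝ)))
          ≤ c (k+1) * ((a (k+1) : ℝ) * (z:ℝ) + ((Δ:ℤ):ℝ)) := by
        rw [sum_range_succ, hΔr]
        have h1 : c k * (z:ℝ) ≤ (a (k+1) : ℝ) * c (k+1) * (z:ℝ) :=
          mul_le_mul_of_nonneg_right hcNN hzr
        nlinarith
      -- nonnegativity of the new integer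
      have h0new : 0 ≤ (a (k+1) : ℤ) * z + Δ := by
        by_contra hneg
        push_neg at hneg
        have h1 : (a (k+1) : ℤ) * z + Δ ≤ -1 := by
          linarith [Int.lt_iff_add_one_le.mp hneg]
        have hler : (a (k+1) : ℝ) * (z:ℝ) + ((Δ:ℤ):ℝ) ≤ -1 := by
          exact_mod_cast h1
        have h2 : c (k+1) * ((a (k+1) : ℝ) * (z:ℝ) + ((Δ:ℤ):ℝ)) ≤ c (k+1) * (-1) :=
          mul_le_mul_of_nonneg_left hler hck1.le
        have hS : (∑ i ∈ range (k+1), c i * (Bhat i : ℝ)) ≤ C :=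
          hprefix Bhat hBhatBudget (k+1) hk1.le
        have hfl : ((C - ∑ j ∈ range (k+1), c j * (Bhat j : ℝ)) / c (k+1))
            < (Bhat (k+1) : ℝ) + 1 := by
          rw [hBhat (k+1) hk1]
          exact Nat.lt_floor_add_one _
        rw [div_lt_iff₀ hck1] at hfl
        have hBle : (∑ i ∈ range (k+1+1), c i * (B i : ℝ)) ≤ C :=
          hprefix B hBbudget (k+2) hk1
        have hsplit : (∑ i ∈ range (k+1+1), c i * ((Bhat i : ℝ) - (B i : ℝ)))
            = (∑ i ∈ range (k+1+1), c i * (Bhat i : ℝ))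
              - (∑ i ∈ range (k+1+1), c i * (B i : ℝ)) := by
          rw [← Finset.sum_sub_distrib]
          exact Finset.sum_congr rfl (fun i _ => by ring)
        have hBhat2 : C - c (k+1) < ∑ i ∈ range (k+1+1), c i * (Bhat i : ℝ) := by
          rw [sum_range_succ]
          nlinarith
        linarith
      have hcast : (((a (k+1) : ℤ) * z + Δ : ℤ) : ℝ)
          = (a (k+1) : ℝ) * (z:ℝ) + ((Δ:ℤ):ℝ) := by push_cast; ring
      have hTnew : (N (k+1) : ℝ) * (∑ i ∈ range (k+1+1), ((Bhat i : ℝ) - (B i : ℝ))/(N i : ℝ))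
          = (((a (k+1) : ℤ) * z + Δ : ℤ) : ℝ) := by
        rw [hcast, hΔr, sum_range_succ, mul_add]
        have hcancel : (N (k+1) : ℝ) * (((Bhat (k+1) : ℝ) - (B (k+1) : ℝ))/(N (k+1) : ℝ))
            = (Bhat (k+1) : ℝ) - (B (k+1) : ℝ) := by field_simp
        rw [hcancel, eq1, mul_assoc, hzT]
      refine ⟨(a (k+1) : ℤ) * z + Δ, h0new, hTnew, ?_⟩
      rw [hcast]
      exact hub
  -- conclude
  apply Finset.sum_le_sum
  intro k hk
  have hkK : k < K := mem_range.1 hk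
  obtain ⟨z, hz0, hzT, -⟩ := key k hkK
  have hTnn : 0 ≤ ∑ i ∈ range (k+1), ((Bhat i : ℝ) - (B i : ℝ))/(N i : ℝ) := by
    have hzr : (0:ℝ) ≤ (z:ℝ) := by exact_mod_cast hz0
    rw [← hzT] at hzr
    exact nonneg_of_mul_nonneg_right hzr (hNpos k hkK)
  have hsplit : (∑ i ∈ range (k+1), ((Bhat i : ℝ) - (B i : ℝ))/(N i : ℝ))
      = (∑ i ∈ range (k+1), (Bhat i : ℝ)/(N i : ℝ))
        - (∑ i ∈ range (k+1), (B i : ℝ)/(N i : ℝ)) := by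
    rw [← Finset.sum_sub_distrib]
    exact Finset.sum_congr rfl (fun i _ => by rw [sub_div])
  rw [hsplit] at hTnn
  have hst : (∑ i ∈ range (k+1), (B i : ℝ)/(N i : ℝ))
      ≤ ∑ i ∈ range (k+1), (Bhat i : ℝ)/(N i : ℝ) := by linarith
  have hs : (0:ℝ) ≤ ∑ i ∈ range (k+1), (B i : ℝ)/(N i : ℝ) :=
    Finset.sum_nonneg (fun i _ => by positivity)
  have ht : (∑ i ∈ range (k+1), (Bhat i : ℝ)/(N i : ℝ)) < 1/2 :=
    hblind Bhat hBhatFeas hBhatBudget k hkK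
  exact mul_le_mul_of_nonneg_left (Dstar_anti hPfa hPfaPd hPd hs hst ht)
    (Nat.cast_nonneg _)
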